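/- Let P₁,…,P₂ₖ₋₁ be the vertices of a regular (2k−1)-gon, and for each i let Mᵢ be the convex hull of the k consecutive vertices Pᵢ, Pᵢ₊₁, …, Pᵢ₊ₖ₋₁ (indices mod 2k−1). Then the intersection of any k distinct sets among M₁,…,M₂ₖ₋₁ is either empty or a single vertex of the polygon, and every vertex Pⱼ lies in exactly k of the sets Mᵢ. -/

import Mathlib

open Real

lemma aux_pin (a b t β : ℝ) (hc : 0 < Real.cos β)
    (h1 : Real.cos β ≤ a * Real.cos (t - β) + b * Real.sin (t - β))
    (h2 : Real.cos β ≤ a * Real.cos (t + β) + b * Real.sin (t + β))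
    (hd : a ^ 2 + b ^ 2 ≤ 1) : a = Real.cos t ∧ b = Real.sin t := by
  have e1 : Real.cos (t - β) + Real.cos (t + β) = 2 * Real.cos t * Real.cos β := by
    rw [Real.cos_sub, Real.cos_add]; ring
  have e2 : Real.sin (t - β) + Real.sin (t + β) = 2 * Real.sin t * Real.cos β := by
    rw [Real.sin_sub, Real.sin_add]; ring
  have h3 : Real.cos β + Real.cos β ≤
      a * (Real.cos (t - β) + Real.cos (t + β)) + b * (Real.sin (t - β) + Real.sin (t + β)) := by
    ring_nf
    ring_nf at h1 h2
    linarith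
  rw [e1, e2] at h3
  have h4 : (1 : ℝ) ≤ a * Real.cos t + b * Real.sin t := by
    have h5 : (2 * Real.cos β) * 1 ≤ (2 * Real.cos β) * (a * Real.cos t + b * Real.sin t) := by
      nlinarith [h3]
    exact le_of_mul_le_mul_left h5 (by linarith)
  have hpy := Real.sin_sq_add_cos_sq t
  constructor <;> nlinarith [sq_nonneg (a - Real.cos t), sq_nonneg (b - Real.sin t)]
lemma aux_D (k n D : ℕ) (hk : 2 ≤ k) (hn : (n : ℝ) = 2 * k - 1) (hD : D < n)
    (h : Real.cos (((k : ℝ) - 1) * π / n) ≤ Real.cos ((2 * (D : ℝ) - ((k : ℝ) - 1)) * π / n)) :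
    D < k := by
  by_contra hcon
  push_neg at hcon
  have hπ := Real.pi_pos
  have hk1 : (2 : ℝ) ≤ (k : ℝ) := by exact_mod_cast hk
  have hnpos : (0 : ℝ) < n := by rw [hn]; linarith
  have hx1 : (k : ℝ) + 1 ≤ 2 * (D : ℝ) - ((k : ℝ) - 1) := by
    have : (k : ℝ) ≤ D := by exact_mod_cast hcon
    linarith
  have hx2 : 2 * (D : ℝ) - ((k : ℝ) - 1) ≤ 3 * (k : ℝ) - 3 := by
    have : (D : ℝ) + 1 ≤ n := by exact_mod_cast hD
    rw [hn] at this; linarith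
  set x : ℝ := 2 * (D : ℝ) - ((k : ℝ) - 1) with hxdef
  by_cases hxn : x ≤ n
  · have hlt : Real.cos (x * π / n) < Real.cos (((k : ℝ) - 1) * π / n) := by
      apply Real.cos_lt_cos_of_nonneg_of_le_pi
      · apply div_nonneg (mul_nonneg (by linarith) hπ.le) hnpos.le
      · rw [div_le_iff₀ hnpos]; nlinarith
      · rw [div_lt_div_iff₀ hnpos hnpos]
        have := mul_lt_mul_of_pos_right (show (k:ℝ)-1 < x by linarith) (mul_pos hπ hnpos)
        linarith
    linarith
  · push_neg at hxn
    have key : Real.cos (x * π / n) = Real.cos ((2 * (n : ℝ) - x) * π / n) := by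
      rw [show (2 * (n : ℝ) - x) * π / n = 2 * π - x * π / n by field_simp,
        Real.cos_two_pi_sub]
    have hy1 : (k : ℝ) + 1 ≤ 2 * (n : ℝ) - x := by rw [hn]; linarith
    have hlt : Real.cos ((2 * (n : ℝ) - x) * π / n) < Real.cos (((k : ℝ) - 1) * π / n) := by
      apply Real.cos_lt_cos_of_nonneg_of_le_pi
      · apply div_nonneg (mul_nonneg (by linarith) hπ.le) hnpos.le
      · rw [div_le_iff₀ hnpos]; nlinarith
      · rw [div_lt_div_iff₀ hnpos hnpos]
        have := mul_lt_mul_of_pos_right (show (k:ℝ)-1 < 2*(n:ℝ)-x by linarith) (mul_pos hπ hnpos)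
        linarith
    rw [key] at h
    linarith
/-- For the regular `(2k-1)`-gon with `Mᵢ` the convex hull of `k` consecutive
vertices starting at `Pᵢ`: the intersection of any `k` distinct sets `Mᵢ` is
empty or a single vertex, and every vertex lies in exactly `k` of the sets. -/
theorem polygon_consecutive_hulls (k : ℕ) (hk : 2 ≤ k)
    (P : ZMod (2 * k - 1) → ℝ × ℝ)
    (hP : ∀ j : ZMod (2 * k - 1),
      P j = (Real.cos (2 * π * j.val / (2 * k - 1)),
             Real.sin (2 * π * j.val / (2 * k - 1))))
    (M : ZMod (2 * k - 1) → Set (ℝ × ℝ))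
    (hM : ∀ i, M i = convexHull ℝ {p | ∃ m : ℕ, m < k ∧ p = P (i + m)}) :
    (∀ S : Finset (ZMod (2 * k - 1)), S.card = k →
        (⋂ i ∈ S, M i) = ∅ ∨ ∃ j, (⋂ i ∈ S, M i) = {P j}) ∧
    (∀ j, ({i | P j ∈ M i} : Set (ZMod (2 * k - 1))).ncard = k) := by
  haveI : NeZero (2 * k - 1) := ⟨by omega⟩
  have hπ := Real.pi_pos
  have hk1 : (2 : ℝ) ≤ (k : ℝ) := by exact_mod_cast hk
  have hN : ((2 * k - 1 : ℕ) : ℝ) = 2 * (k : ℝ) - 1 := by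
    rw [Nat.cast_sub (by omega : 1 ≤ 2 * k)]; push_cast; ring
  have hNpos : (0 : ℝ) < 2 * (k : ℝ) - 1 := by linarith
  have hk1c : ((k - 1 : ℕ) : ℝ) = (k : ℝ) - 1 := by
    rw [Nat.cast_sub (by omega : 1 ≤ k)]; push_cast; ring
  -- val arithmetic
  have hval : ∀ (i : ZMod (2 * k - 1)) (m : ℕ),
      ∃ e : ℕ, i.val + m = (i + (m : ZMod (2 * k - 1))).val + (2 * k - 1) * e := by
    intro i m
    have h1 : (i + (m : ZMod (2 * k - 1))).val = (i.val + m) % (2 * k - 1) := by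
      rw [ZMod.val_add, ZMod.val_natCast, Nat.add_mod_mod]
    refine ⟨(i.val + m) / (2 * k - 1), ?_⟩
    rw [h1]
    exact (Nat.mod_add_div _ _).symm
  -- P at shifted index
  have hPadd : ∀ (i : ZMod (2 * k - 1)) (m : ℕ),
      P (i + (m : ZMod (2 * k - 1))) =
        (Real.cos (2 * π * ((i.val : ℝ) + m) / (2 * (k : ℝ) - 1)),
         Real.sin (2 * π * ((i.val : ℝ) + m) / (2 * (k : ℝ) - 1))) := by
    intro i m
    obtain ⟨e, he⟩ := hval i m
    rw [hP]
    have heR : (i.val : ℝ) + m = ((i + (m : ZMod (2 * k - 1))).val : ℝ) + (2 * (k : ℝ) - 1) * e := by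
      rw [← hN]; exact_mod_cast congrArg (Nat.cast : ℕ → ℝ) he
    have harg : 2 * π * ((i.val : ℝ) + m) / (2 * (k : ℝ) - 1) =
        2 * π * ((i + (m : ZMod (2 * k - 1))).val : ℝ) / (2 * (k : ℝ) - 1) + ((e : ℤ) : ℝ) * (2 * π) := by
      rw [heR]; push_cast; field_simp
    rw [harg, Real.cos_add_int_mul_two_pi, Real.sin_add_int_mul_two_pi]
  -- halfplane bound
  have hhalf : ∀ i : ZMod (2 * k - 1), M i ⊆ {x : ℝ × ℝ |
      Real.cos (((k : ℝ) - 1) * π / (2 * (k : ℝ) - 1)) ≤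
        x.1 * Real.cos ((2 * (i.val : ℝ) + ((k : ℝ) - 1)) * π / (2 * (k : ℝ) - 1)) +
        x.2 * Real.sin ((2 * (i.val : ℝ) + ((k : ℝ) - 1)) * π / (2 * (k : ℝ) - 1))} := by
    intro i
    rw [hM]
    apply convexHull_min
    · rintro p ⟨m, hm, rfl⟩
      rw [hPadd i m]
      simp only [Set.mem_setOf_eq]
      rw [← Real.cos_sub]
      have hTθ : 2 * π * ((i.val : ℝ) + m) / (2 * (k : ℝ) - 1) -
          (2 * (i.val : ℝ) + ((k : ℝ) - 1)) * π / (2 * (k : ℝ) - 1) =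
          (2 * (m : ℝ) - ((k : ℝ) - 1)) * π / (2 * (k : ℝ) - 1) := by
        field_simp; ring
      rw [hTθ]
      have hm' : (m : ℝ) ≤ (k : ℝ) - 1 := by
        have : (m : ℝ) + 1 ≤ k := by exact_mod_cast hm
        linarith
      have habs : |(2 * (m : ℝ) - ((k : ℝ) - 1)) * π / (2 * (k : ℝ) - 1)| ≤
          ((k : ℝ) - 1) * π / (2 * (k : ℝ) - 1) := by
        rw [abs_div, abs_mul, abs_of_pos hπ, abs_of_pos hNpos]
        have hmm : |2 * (m : ℝ) - ((k : ℝ) - 1)| ≤ (k : ℝ) - 1 := by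
          rw [abs_le]
          constructor
          · have : (0 : ℝ) ≤ (m : ℝ) := Nat.cast_nonneg m
            linarith
          · linarith
        gcongr
      calc Real.cos (((k : ℝ) - 1) * π / (2 * (k : ℝ) - 1)) ≤
            Real.cos |(2 * (m : ℝ) - ((k : ℝ) - 1)) * π / (2 * (k : ℝ) - 1)| := by
              apply Real.cos_le_cos_of_nonneg_of_le_pi (abs_nonneg _) ?_ habs
              rw [div_le_iff₀ hNpos]; nlinarith
        _ = Real.cos ((2 * (m : ℝ) - ((k : ℝ) - 1)) * π / (2 * (k : ℝ) - 1)) := Real.cos_abs _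
    · apply convex_halfSpace_ge
      exact ⟨fun x y => by simp [Prod.fst_add, Prod.snd_add]; ring,
             fun c x => by simp [Prod.smul_fst, Prod.smul_snd, smul_eq_mul]; ring⟩
  -- disk bound
  have hdisk : ∀ i : ZMod (2 * k - 1), M i ⊆ {x : ℝ × ℝ | x.1 ^ 2 + x.2 ^ 2 ≤ 1} := by
    intro i
    rw [hM]
    apply convexHull_min
    · rintro p ⟨m, hm, rfl⟩
      rw [hPadd i m]
      simp only [Set.mem_setOf_eq]
      rw [Real.cos_sq_add_sin_sq]
    · intro x hx y hy a b ha hb hab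
      simp only [Set.mem_setOf_eq] at *
      have hx1 : (a • x + b • y).1 = a * x.1 + b * y.1 := rfl
      have hx2 : (a • x + b • y).2 = a * x.2 + b * y.2 := rfl
      rw [hx1, hx2]
      nlinarith [mul_nonneg (mul_nonneg ha hb) (sq_nonneg (x.1 - y.1)),
        mul_nonneg (mul_nonneg ha hb) (sq_nonneg (x.2 - y.2)),
        mul_nonneg (mul_nonneg ha hb) (by linarith : (0:ℝ) ≤ 1 - (x.1^2 + x.2^2)),
        mul_nonneg (mul_nonneg ha hb) (by linarith : (0:ℝ) ≤ 1 - (y.1^2 + y.2^2)),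
        mul_nonneg (mul_nonneg ha ha) (by linarith : (0:ℝ) ≤ 1 - (x.1^2 + x.2^2)),
        mul_nonneg (mul_nonneg hb hb) (by linarith : (0:ℝ) ≤ 1 - (y.1^2 + y.2^2))]

  -- positivity of cos β
  have hcβ : 0 < Real.cos (((k : ℝ) - 1) * π / (2 * (k : ℝ) - 1)) := by
    apply Real.cos_pos_of_mem_Ioo
    constructor
    · have h0 : (0:ℝ) ≤ ((k : ℝ) - 1) * π / (2 * (k : ℝ) - 1) :=
        div_nonneg (mul_nonneg (by linarith) hπ.le) hNpos.le
      linarith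
    · rw [div_lt_iff₀ hNpos]; nlinarith
  -- the pinning lemma applied
  have hmain : ∀ (i : ZMod (2 * k - 1)) (x : ℝ × ℝ), x ∈ M i →
      x ∈ M (i + ((k - 1 : ℕ) : ZMod (2 * k - 1))) →
      x = P (i + ((k - 1 : ℕ) : ZMod (2 * k - 1))) := by
    intro i x h1 h2
    obtain ⟨e, he⟩ := hval i (k - 1)
    have c1 := hhalf i h1
    have c2 := hhalf _ h2
    have hd := hdisk i h1
    simp only [Set.mem_setOf_eq] at c1 c2 hd
    have hcast := congrArg (Nat.cast : ℕ → ℝ) he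
    rw [Nat.cast_add, Nat.cast_add, Nat.cast_mul, hk1c, hN] at hcast
    have heR : ((i + ((k - 1 : ℕ) : ZMod (2 * k - 1))).val : ℝ) =
        (i.val : ℝ) + ((k : ℝ) - 1) - (2 * (k : ℝ) - 1) * e := by linarith
    have hθ1 : (2 * (i.val : ℝ) + ((k : ℝ) - 1)) * π / (2 * (k : ℝ) - 1) =
        2 * π * ((i.val : ℝ) + ((k : ℝ) - 1)) / (2 * (k : ℝ) - 1) -
        ((k : ℝ) - 1) * π / (2 * (k : ℝ) - 1) := by field_simp; ring
    have hθ2 : (2 * ((i + ((k - 1 : ℕ) : ZMod (2 * k - 1))).val : ℝ) + ((k : ℝ) - 1)) * π /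
        (2 * (k : ℝ) - 1) =
        (2 * π * ((i.val : ℝ) + ((k : ℝ) - 1)) / (2 * (k : ℝ) - 1) +
        ((k : ℝ) - 1) * π / (2 * (k : ℝ) - 1)) + ((-(e : ℤ) : ℤ) : ℝ) * (2 * π) := by
      rw [heR]; push_cast; field_simp; ring
    rw [hθ1] at c1
    rw [hθ2, Real.cos_add_int_mul_two_pi, Real.sin_add_int_mul_two_pi] at c2
    obtain ⟨hx1, hx2⟩ := aux_pin x.1 x.2
      (2 * π * ((i.val : ℝ) + ((k : ℝ) - 1)) / (2 * (k : ℝ) - 1))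
      (((k : ℝ) - 1) * π / (2 * (k : ℝ) - 1)) hcβ c1 c2 hd
    rw [hPadd i (k - 1), hk1c]
    exact Prod.ext hx1 hx2
  -- membership characterization
  have hmem : ∀ i j : ZMod (2 * k - 1), P j ∈ M i ↔ ∃ m : ℕ, m < k ∧ j = i + (m : ZMod (2 * k - 1)) := by
    intro i j
    constructor
    · intro hj
      have c := hhalf i hj
      simp only [Set.mem_setOf_eq] at c
      have hjD : j = i + (((j - i).val : ℕ) : ZMod (2 * k - 1)) := by
        rw [ZMod.natCast_rightInverse (j - i)]; ring
      have hDlt : (j - i).val < 2 * k - 1 := ZMod.val_lt _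
      rw [hjD, hPadd i (j - i).val] at c
      rw [← Real.cos_sub] at c
      have harg : 2 * π * ((i.val : ℝ) + ((j - i).val : ℝ)) / (2 * (k : ℝ) - 1) -
          (2 * (i.val : ℝ) + ((k : ℝ) - 1)) * π / (2 * (k : ℝ) - 1) =
          (2 * (((j - i).val : ℕ) : ℝ) - ((k : ℝ) - 1)) * π / (2 * (k : ℝ) - 1) := by
        field_simp; ring
      rw [harg] at c
      have hDk : (j - i).val < k := by
        apply aux_D k (2 * k - 1) (j - i).val hk hN hDlt
        rw [hN]
        exact c
      exact ⟨(j - i).val, hDk, hjD⟩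
    · rintro ⟨m, hm, rfl⟩
      rw [hM]
      exact subset_convexHull ℝ _ ⟨m, hm, rfl⟩
  -- pigeonhole
  have hpigeon : ∀ S : Finset (ZMod (2 * k - 1)), S.card = k →
      ∃ i ∈ S, i + ((k - 1 : ℕ) : ZMod (2 * k - 1)) ∈ S := by
    intro S hS
    by_contra hcon
    push_neg at hcon
    have hinj : Function.Injective (fun x : ZMod (2 * k - 1) =>
        x + ((k - 1 : ℕ) : ZMod (2 * k - 1))) := fun a b h => by simpa using h
    have hdisj : Disjoint S (S.image (fun x => x + ((k - 1 : ℕ) : ZMod (2 * k - 1)))) := by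
      rw [Finset.disjoint_right]
      intro a ha haS
      obtain ⟨b, hb, rfl⟩ := Finset.mem_image.mp ha
      exact hcon b hb haS
    have hcard := Finset.card_union_of_disjoint hdisj
    rw [Finset.card_image_of_injective _ hinj, hS] at hcard
    have hle := Finset.card_le_univ (S ∪ S.image (fun x => x + ((k - 1 : ℕ) : ZMod (2 * k - 1))))
    rw [ZMod.card] at hle
    omega
  constructor
  · -- part 1
    intro S hS
    by_cases hE : (⋂ i ∈ S, M i) = ∅
    · exact Or.inl hE
    · right
      obtain ⟨x, hx⟩ := Set.nonempty_iff_ne_empty.mpr hE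
      obtain ⟨i, hiS, hi'S⟩ := hpigeon S hS
      refine ⟨i + ((k - 1 : ℕ) : ZMod (2 * k - 1)), ?_⟩
      have hxM : ∀ y ∈ (⋂ i ∈ S, M i), y = P (i + ((k - 1 : ℕ) : ZMod (2 * k - 1))) := by
        intro y hy
        simp only [Set.mem_iInter] at hy
        exact hmain i y (hy i hiS) (hy _ hi'S)
      apply Set.eq_singleton_iff_unique_mem.mpr
      refine ⟨?_, hxM⟩
      have hxP := hxM x hx
      rw [← hxP]
      exact hx
  · -- part 2
    intro j
    have hset : {i : ZMod (2 * k - 1) | P j ∈ M i} =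
        ↑((Finset.range k).image (fun m : ℕ => j - (m : ZMod (2 * k - 1)))) := by
      ext i
      simp only [Set.mem_setOf_eq, Finset.coe_image, Set.mem_image, Finset.mem_coe,
        Finset.coe_range, Set.mem_Iio, hmem i j]
      constructor
      · rintro ⟨m, hm, hjm⟩
        exact ⟨m, hm, by rw [hjm]; ring⟩
      · rintro ⟨m, hm, rfl⟩
        exact ⟨m, hm, by ring⟩
    rw [hset, Set.ncard_coe_finset]
    rw [Finset.card_image_of_injOn, Finset.card_range]
    intro a ha b hb hab
    simp only [Finset.coe_range, Set.mem_Iio] at ha hb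
    have hcast : (a : ZMod (2 * k - 1)) = (b : ZMod (2 * k - 1)) := sub_right_injective hab
    calc a = ((a : ZMod (2 * k - 1))).val := (ZMod.val_cast_of_lt (by omega)).symm
      _ = ((b : ZMod (2 * k - 1))).val := by rw [hcast]
      _ = b := ZMod.val_cast_of_lt (by omega)
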